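/- Let L be an even lattice with discriminant group Z/2 generated by [v/2] where v ∈ L has (v,v) = -2, and let x be a generator of a rank-1 lattice (2) with (x,x) = 2. Then the index-2 overlattice L' of L ⊕ Zx generated by L, x and (x+v)/2 is even and unimodular, and every isometry g of L extends to an isometry ḡ of L' fixing x, via ḡ((x+v)/2) = (x + g(v))/2. -/

import Mathlib

/-- Let `L` be an even lattice (full in `V = L ⊗ ℚ`, with nondegenerate symmetric
form `B`) with discriminant group `ℤ/2` generated by `[v/2]`, where `v ∈ L` has
`(v,v) = -2` and `v/2 ∉ L`, and let `x` generate a rank-1 lattice `(2)` with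
`(x,x) = 2`. In the ambient space `W = V × ℚ` with form
`Bw((u,s),(u',s')) = B(u,u') + 2ss'` (so `x = (0,1)`), the index-2 overlattice
`L'` of `L ⊕ ℤx` generated by `L`, `x` and `(x+v)/2 = (v/2, 1/2)` is even,
integral and unimodular, and every isometry `g` of `L` extends to the isometry
`ḡ : (u,s) ↦ (g u, s)` of `L'` fixing `x`, with `ḡ((x+v)/2) = (x + g(v))/2`. -/
theorem stmt_9 {V : Type*} [AddCommGroup V] [Module ℚ V]
    (B : LinearMap.BilinForm ℚ V) (hsymm : ∀ x y : V, B x y = B y x)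
    (hnd : ∀ x : V, (∀ y : V, B x y = 0) → x = 0)
    (L : Submodule ℤ V)
    (hspan : Submodule.span ℚ (L : Set V) = ⊤)
    (hint : ∀ x ∈ L, ∀ y ∈ L, ∃ n : ℤ, B x y = (n : ℚ))
    (heven : ∀ x ∈ L, ∃ n : ℤ, B x x = 2 * (n : ℚ))
    (v : V) (hv : v ∈ L) (hv2 : B v v = -2)
    (hvdual : ∀ y ∈ L, ∃ n : ℤ, B ((1 / 2 : ℚ) • v) y = (n : ℚ))
    (hvhalf : (1 / 2 : ℚ) • v ∉ L)
    (hgen : ∀ x : V, (∀ y ∈ L, ∃ n : ℤ, B x y = (n : ℚ)) →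
      (x ∈ L ∨ x - (1 / 2 : ℚ) • v ∈ L))
    (Bw : (V × ℚ) → (V × ℚ) → ℚ)
    (hBw : ∀ p q : V × ℚ, Bw p q = B p.1 q.1 + 2 * p.2 * q.2)
    (L' : Submodule ℤ (V × ℚ))
    (hL' : L' = Submodule.span ℤ
      (((fun l : V => (l, (0 : ℚ))) '' (L : Set V)) ∪
        {((0 : V), (1 : ℚ)), ((1 / 2 : ℚ) • v, (1 / 2 : ℚ))}))
    (g : V ≃ₗ[ℚ] V) (hiso : ∀ x y : V, B (g x) (g y) = B x y)
    (hgL : ∀ x ∈ L, g x ∈ L) (hgL' : ∀ x ∈ L, g.symm x ∈ L)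
    (gbar : (V × ℚ) ≃ₗ[ℚ] (V × ℚ))
    (hgbar : ∀ p : V × ℚ, gbar p = (g p.1, p.2)) :
    (∀ w ∈ L', ∀ u ∈ L', ∃ n : ℤ, Bw w u = (n : ℚ)) ∧
    (∀ w ∈ L', ∃ n : ℤ, Bw w w = 2 * (n : ℚ)) ∧
    (∀ w : V × ℚ, (∀ u ∈ L', ∃ n : ℤ, Bw w u = (n : ℚ)) → w ∈ L') ∧
    (∀ p q : V × ℚ, Bw (gbar p) (gbar q) = Bw p q) ∧
    (∀ w ∈ L', gbar w ∈ L') ∧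
    gbar ((0 : V), (1 : ℚ)) = ((0 : V), (1 : ℚ)) ∧
    gbar ((1 / 2 : ℚ) • v, (1 / 2 : ℚ)) = ((1 / 2 : ℚ) • g v, (1 / 2 : ℚ)) := by
  set hv' : V := (1 / 2 : ℚ) • v with hhv
  -- value of the form on hv'
  have hvv : B hv' hv' = -(1/2) := by simp [hhv, hv2]
  have hvdual' : ∀ y ∈ L, ∃ n : ℤ, B y hv' = (n : ℚ) := by
    intro y hy
    rw [hsymm]
    exact hvdual y hy
  -- membership of the canonical combinations
  have key2 : ∀ l ∈ L, ∀ a b : ℤ,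
      (l + (b : ℚ) • hv', (a : ℚ) + (b : ℚ) / 2) ∈ L' := by
    intro l hl a b
    rw [hL']
    have h1 : (l, (0:ℚ)) ∈ Submodule.span ℤ
        (((fun l : V => (l, (0 : ℚ))) '' (L : Set V)) ∪
          {((0 : V), (1 : ℚ)), ((1 / 2 : ℚ) • v, (1 / 2 : ℚ))}) :=
      Submodule.subset_span (Or.inl ⟨l, hl, rfl⟩)
    have h2 : ((0 : V), (1 : ℚ)) ∈ Submodule.span ℤ
        (((fun l : V => (l, (0 : ℚ))) '' (L : Set V)) ∪
          {((0 : V), (1 : ℚ)), ((1 / 2 : ℚ) • v, (1 / 2 : ℚ))}) :=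
      Submodule.subset_span (Or.inr (by simp))
    have h3 : ((1 / 2 : ℚ) • v, (1 / 2 : ℚ)) ∈ Submodule.span ℤ
        (((fun l : V => (l, (0 : ℚ))) '' (L : Set V)) ∪
          {((0 : V), (1 : ℚ)), ((1 / 2 : ℚ) • v, (1 / 2 : ℚ))}) :=
      Submodule.subset_span (Or.inr (by simp))
    have := Submodule.add_mem _ (Submodule.add_mem _ h1
      (Submodule.smul_mem _ a h2)) (Submodule.smul_mem _ b h3)
    convert this using 1
    simp only [Prod.smul_mk, Prod.mk_add_mk, smul_zero, zsmul_eq_mul, mul_one,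
      Prod.mk.injEq]
    refine ⟨?_, by push_cast; ring⟩
    rw [show (b : ℤ) • ((1/2 : ℚ) • v) = (b : ℚ) • ((1/2 : ℚ) • v) from
      (Int.cast_smul_eq_zsmul ℚ b _).symm, hhv]
    abel
  -- canonical form of elements of L'
  have key : ∀ w ∈ L', ∃ l ∈ L, ∃ a b : ℤ,
      w = (l + (b : ℚ) • hv', (a : ℚ) + (b : ℚ) / 2) := by
    intro w hw
    rw [hL'] at hw
    induction hw using Submodule.span_induction with
    | mem w hw =>
      rcases hw with ⟨l, hl, rfl⟩ | hw
      · exact ⟨l, hl, 0, 0, by simp⟩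
      · rcases hw with rfl | rfl
        · exact ⟨0, L.zero_mem, 1, 0, by simp⟩
        · exact ⟨0, L.zero_mem, 0, 1, by norm_num [hhv]⟩
    | zero => exact ⟨0, L.zero_mem, 0, 0, by simp; rfl⟩
    | add w u _ _ ihw ihu =>
      obtain ⟨l, hl, a, b, rfl⟩ := ihw
      obtain ⟨l', hl', a', b', rfl⟩ := ihu
      refine ⟨l + l', L.add_mem hl hl', a + a', b + b', ?_⟩
      simp only [Prod.mk_add_mk, Prod.mk.injEq]
      refine ⟨?_, by push_cast; ring⟩
      push_cast
      rw [add_smul]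
      abel
    | smul c w _ ihw =>
      obtain ⟨l, hl, a, b, rfl⟩ := ihw
      refine ⟨c • l, L.smul_mem c hl, c * a, c * b, ?_⟩
      simp only [Prod.smul_mk, Prod.mk.injEq]
      refine ⟨?_, by rw [zsmul_eq_mul]; push_cast; ring⟩
      rw [← Int.cast_smul_eq_zsmul ℚ c, smul_add, smul_smul]
      push_cast
      ring_nf
      rw [Int.cast_smul_eq_zsmul]
  -- the pairing of canonical forms
  have pair : ∀ l ∈ L, ∀ l' ∈ L, ∀ a b a' b' : ℤ, ∃ n : ℤ,
      Bw (l + (b : ℚ) • hv', (a : ℚ) + (b : ℚ) / 2)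
         (l' + (b' : ℚ) • hv', (a' : ℚ) + (b' : ℚ) / 2)
        = (n : ℚ) + (b : ℚ) * (b' : ℚ) * (B hv' hv' + 1/2) := by
    intro l hl l' hl' a b a' b'
    obtain ⟨n1, hn1⟩ := hint l hl l' hl'
    obtain ⟨n2, hn2⟩ := hvdual l' hl'
    obtain ⟨n3, hn3⟩ := hvdual' l hl
    refine ⟨n1 + b' * n3 + b * n2 + 2*a*a' + a*b' + a'*b, ?_⟩
    rw [hBw]
    simp only [map_add, map_smul, LinearMap.add_apply, LinearMap.smul_apply,
      smul_eq_mul, hn1, hn2, hn3]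
    push_cast
    ring
  refine ⟨?_, ?_, ?_, ?_, ?_, ?_, ?_⟩
  · -- integrality
    intro w hw u hu
    obtain ⟨l, hl, a, b, rfl⟩ := key w hw
    obtain ⟨l', hl', a', b', rfl⟩ := key u hu
    obtain ⟨n, hn⟩ := pair l hl l' hl' a b a' b'
    refine ⟨n, ?_⟩
    rw [hn, hvv]
    ring
  · -- evenness
    intro w hw
    obtain ⟨l, hl, a, b, rfl⟩ := key w hw
    obtain ⟨m, hm⟩ := heven l hl
    obtain ⟨n2, hn2⟩ := hvdual l hl
    refine ⟨m + b * n2 + a*a + a*b, ?_⟩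
    have hn2' : B l hv' = (n2 : ℚ) := by rw [hsymm]; exact hn2
    rw [hBw]
    simp only [map_add, map_smul, LinearMap.add_apply, LinearMap.smul_apply,
      smul_eq_mul, hm, hvv, hn2, hn2']
    push_cast
    ring
  · -- unimodularity
    intro w hw
    obtain ⟨u, s⟩ := w
    have huy : ∀ y ∈ L, ∃ n : ℤ, B u y = (n : ℚ) := by
      intro y hy
      have hyL : ((y, (0:ℚ)) : V × ℚ) ∈ L' := by
        have := key2 y hy 0 0
        simpa using this
      obtain ⟨n, hn⟩ := hw _ hyL
      refine ⟨n, ?_⟩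
      rw [hBw] at hn
      simpa using hn
    have hhmem : (((1 / 2 : ℚ) • v, (1 / 2 : ℚ)) : V × ℚ) ∈ L' := by
      have := key2 0 L.zero_mem 0 1
      simpa [hhv] using this
    obtain ⟨m, hm⟩ := hw _ hhmem
    rw [hBw] at hm
    simp only at hm
    -- hm : B u ((1/2)•v) + 2 * s * (1/2) = m
    rcases hgen u huy with huL | huL
    · obtain ⟨n, hn⟩ := hvdual' u huL
      have hs : s = ((m - n : ℤ) : ℚ) := by
        rw [hhv] at hn
        push_cast
        linarith [hm, hn]
      have := key2 u huL (m - n) 0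
      simpa [hs] using this
    · obtain ⟨n, hn⟩ := hvdual' (u - hv') huL
      have hB : B u hv' = (n : ℚ) + B hv' hv' := by
        have : B u hv' = B (u - hv') hv' + B hv' hv' := by
          rw [← LinearMap.add_apply, ← map_add]
          simp
        rw [this, hn]
      have hs : s = ((m - n : ℤ) : ℚ) + 1/2 := by
        rw [hhv] at hB
        rw [hB, hvv] at hm
        push_cast
        linarith [hm]
      have := key2 (u - hv') huL (m - n) 1
      have heq : ((u - hv' + ((1:ℤ) : ℚ) • hv', ((m - n : ℤ) : ℚ) + ((1:ℤ) : ℚ) / 2) : V × ℚ)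
          = (u, s) := by
        simp [hs]
      rwa [heq] at this
  · -- isometry
    intro p q
    rw [hgbar, hgbar, hBw, hBw]
    simp [hiso]
  · -- gbar preserves L'
    intro w hw
    obtain ⟨l, hl, a, b, rfl⟩ := key w hw
    -- (1/2) • g v - (1/2) • v ∈ L
    have hgv : ∀ y ∈ L, ∃ n : ℤ, B ((1 / 2 : ℚ) • g v) y = (n : ℚ) := by
      intro y hy
      obtain ⟨n, hn⟩ := hvdual (g.symm y) (hgL' y hy)
      refine ⟨n, ?_⟩
      have : B (g v) y = B v (g.symm y) := by
        conv_lhs => rw [show y = g (g.symm y) by simp]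
        rw [hiso]
      rw [map_smul, LinearMap.smul_apply, smul_eq_mul, this]
      rw [map_smul, LinearMap.smul_apply, smul_eq_mul] at hn
      exact hn
    have hd : (1 / 2 : ℚ) • g v - hv' ∈ L := by
      rcases hgen _ hgv with h | h
      · exfalso
        apply hvhalf
        have := hgL' _ h
        rw [map_smul, g.symm_apply_apply] at this
        exact this
      · rwa [hhv]
    have hmem := key2 (g l + (b : ℚ) • ((1 / 2 : ℚ) • g v - hv'))
      (L.add_mem (hgL l hl) (by rw [Int.cast_smul_eq_zsmul]; exact L.smul_mem b hd))
      a b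
    have heq : gbar (l + (b : ℚ) • hv', (a : ℚ) + (b : ℚ) / 2)
        = (g l + (b : ℚ) • ((1 / 2 : ℚ) • g v - hv') + (b : ℚ) • hv',
           (a : ℚ) + (b : ℚ) / 2) := by
      rw [hgbar]
      simp only [map_add, map_smul, Prod.mk.injEq]
      constructor
      · rw [smul_sub]
        have : g hv' = (1 / 2 : ℚ) • g v := by rw [hhv, map_smul]
        rw [this]
        abel
      · trivial
    rw [heq]
    exact hmem
  · rw [hgbar]; simp
  · rw [hgbar]
    have : g hv' = (1 / 2 : ℚ) • g v := by rw [hhv, map_smul]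
    simp [hhv, this]
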